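/- Let N ∈ ℕ and p₁, p₂ > 0 with p₁ + p₂ < 1, and define W : ℤ × ℤ → ℝ by W(x₁,x₂) = N!/(x₁! x₂! (N−x₁−x₂)!) · p₁^{x₁} p₂^{x₂} (1−p₁−p₂)^{N−x₁−x₂} if x₁ ≥ 0, x₂ ≥ 0 and x₁+x₂ ≤ N, and W(x₁,x₂) = 0 otherwise. With the coefficients A₁₁(x) = (1−p₁)x₁, A₁₂(x) = −p₁x₂, A₂₁(x) = −p₂x₁, A₂₂(x) = (1−p₂)x₂, B₁(x) = p₁(N−x₁) − (1−p₁)x₁, B₂(x) = p₂(N−x₂) − (1−p₂)x₂, the self-adjointness relations hold pointwise on all of ℤ × ℤ: W·B₁ = Δ₁(W·A₁₁) + Δ₂(W·A₁₂) and W·B₂ = Δ₁(W·A₂₁) + Δ₂(W·A₂₂). -/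
import Mathlib


noncomputable section

/-- Forward difference in the first variable. -/
def fd1 (u : ℤ × ℤ → ℝ) : ℤ × ℤ → ℝ := fun x => u (x.1 + 1, x.2) - u x

/-- Forward difference in the second variable. -/
def fd2 (u : ℤ × ℤ → ℝ) : ℤ × ℤ → ℝ := fun x => u (x.1, x.2 + 1) - u x

/-- the trinomial weight
`W(x) = N!/(x₁!x₂!(N−x₁−x₂)!) p₁^{x₁}p₂^{x₂}(1−p₁−p₂)^{N−x₁−x₂}` on the triangle
`{x ∈ ℕ² : x₁+x₂ ≤ N}` (extended by `0`) makes `W·𝒟` self-adjoint for the two-variable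
Krawtchouk difference operator. -/
theorem stmt17 (N : ℕ) (p1 p2 : ℝ)
    (hp1 : 0 < p1) (hp2 : 0 < p2) (hp : p1 + p2 < 1)
    (W : ℤ × ℤ → ℝ)
    (hW : W = fun x => if 0 ≤ x.1 ∧ 0 ≤ x.2 ∧ x.1 + x.2 ≤ (N : ℤ) then
      (N.factorial : ℝ) /
          ((x.1.toNat.factorial : ℝ) * (x.2.toNat.factorial : ℝ) *
            ((N - x.1.toNat - x.2.toNat).factorial : ℝ)) *
        (p1 ^ x.1.toNat * p2 ^ x.2.toNat *
          (1 - p1 - p2) ^ (N - x.1.toNat - x.2.toNat)) else 0) :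
    (∀ x : ℤ × ℤ, W x * (p1 * ((N : ℝ) - (x.1 : ℝ)) - (1 - p1) * (x.1 : ℝ)) =
      fd1 (fun y => W y * ((1 - p1) * (y.1 : ℝ))) x +
        fd2 (fun y => W y * (-p1 * (y.2 : ℝ))) x) ∧
    (∀ x : ℤ × ℤ, W x * (p2 * ((N : ℝ) - (x.2 : ℝ)) - (1 - p2) * (x.2 : ℝ)) =
      fd1 (fun y => W y * (-p2 * (y.1 : ℝ))) x +
        fd2 (fun y => W y * ((1 - p2) * (y.2 : ℝ))) x) := by
  have hq : (0:ℝ) < 1 - p1 - p2 := by linarith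
  have hqne : (1:ℝ) - p1 - p2 ≠ 0 := ne_of_gt hq
  have key1 : ∀ (m k r : ℕ),
      ((m:ℝ)+1) * ((N.factorial : ℝ) /
          (((m+1).factorial : ℝ) * (k.factorial : ℝ) * ((r).factorial : ℝ)) *
        (p1 ^ (m+1) * p2 ^ k * (1 - p1 - p2) ^ r)) * (1 - p1 - p2)
      = p1 * ((r:ℝ)+1) * ((N.factorial : ℝ) /
          ((m.factorial : ℝ) * (k.factorial : ℝ) * ((r+1).factorial : ℝ)) *
        (p1 ^ m * p2 ^ k * (1 - p1 - p2) ^ (r+1))) := by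
    intro m k r
    have h1 : ((m.factorial : ℝ)) ≠ 0 := Nat.cast_ne_zero.mpr (Nat.factorial_ne_zero m)
    have h2 : ((k.factorial : ℝ)) ≠ 0 := Nat.cast_ne_zero.mpr (Nat.factorial_ne_zero k)
    have h3 : ((r.factorial : ℝ)) ≠ 0 := Nat.cast_ne_zero.mpr (Nat.factorial_ne_zero r)
    rw [Nat.factorial_succ m, Nat.factorial_succ r]
    push_cast
    field_simp
    ring
  have key2 : ∀ (m k r : ℕ),
      ((k:ℝ)+1) * ((N.factorial : ℝ) /
          ((m.factorial : ℝ) * ((k+1).factorial : ℝ) * ((r).factorial : ℝ)) *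
        (p1 ^ m * p2 ^ (k+1) * (1 - p1 - p2) ^ r)) * (1 - p1 - p2)
      = p2 * ((r:ℝ)+1) * ((N.factorial : ℝ) /
          ((m.factorial : ℝ) * (k.factorial : ℝ) * ((r+1).factorial : ℝ)) *
        (p1 ^ m * p2 ^ k * (1 - p1 - p2) ^ (r+1))) := by
    intro m k r
    have h1 : ((m.factorial : ℝ)) ≠ 0 := Nat.cast_ne_zero.mpr (Nat.factorial_ne_zero m)
    have h2 : ((k.factorial : ℝ)) ≠ 0 := Nat.cast_ne_zero.mpr (Nat.factorial_ne_zero k)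
    have h3 : ((r.factorial : ℝ)) ≠ 0 := Nat.cast_ne_zero.mpr (Nat.factorial_ne_zero r)
    rw [Nat.factorial_succ k, Nat.factorial_succ r]
    push_cast
    field_simp
    ring
  have hs1 : ∀ x : ℤ × ℤ, ((x.1:ℝ)+1) * W (x.1+1, x.2) * (1-p1-p2)
      = p1 * ((N:ℝ) - (x.1:ℝ) - (x.2:ℝ)) * W x := by
    rintro ⟨a, b⟩
    simp only [hW]
    by_cases hx : 0 ≤ a ∧ 0 ≤ b ∧ a + b ≤ (N:ℤ)
    · obtain ⟨ha, hb, hab⟩ := hx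
      obtain ⟨m, rfl⟩ := Int.eq_ofNat_of_zero_le ha
      obtain ⟨k, rfl⟩ := Int.eq_ofNat_of_zero_le hb
      have hmk : m + k ≤ N := by exact_mod_cast hab
      have hbase : (0:ℤ) ≤ (m:ℤ) ∧ (0:ℤ) ≤ (k:ℤ) ∧ (m:ℤ) + (k:ℤ) ≤ (N:ℤ) := ⟨ha, hb, hab⟩
      rw [if_pos hbase]
      by_cases hlt : m + k < N
      · have hshift : (0:ℤ) ≤ (m:ℤ) + 1 ∧ (0:ℤ) ≤ (k:ℤ) ∧ (m:ℤ) + 1 + (k:ℤ) ≤ (N:ℤ) := by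
          omega
        rw [if_pos hshift]
        obtain ⟨r, hr⟩ : ∃ r, N - m - k = r + 1 := ⟨N - m - k - 1, by omega⟩
        have e1 : (((m:ℤ))+1).toNat = m + 1 := by omega
        have e2 : ((m:ℤ)).toNat = m := by omega
        have e3 : ((k:ℤ)).toNat = k := by omega
        simp only [e1, e2, e3]
        have e4 : N - (m+1) - k = r := by omega
        have e5 : N - m - k = r + 1 := hr
        rw [e4, e5]
        have e6 : ((N:ℝ) - ((m:ℤ):ℝ) - ((k:ℤ):ℝ)) = (r:ℝ) + 1 := by
          have hN : N = m + k + (r+1) := by omega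
          subst hN; push_cast; ring
        rw [e6]
        exact key1 m k r
      · have hshift : ¬((0:ℤ) ≤ (m:ℤ) + 1 ∧ (0:ℤ) ≤ (k:ℤ) ∧ (m:ℤ) + 1 + (k:ℤ) ≤ (N:ℤ)) := by
          omega
        rw [if_neg hshift]
        have e0 : ((N:ℝ) - ((m:ℤ):ℝ) - ((k:ℤ):ℝ)) = 0 := by
          have hN : N = m + k := by omega
          subst hN; push_cast; ring
        rw [e0]; ring
    · rw [if_neg hx]
      by_cases hy : 0 ≤ a + 1 ∧ 0 ≤ b ∧ a + 1 + b ≤ (N:ℤ)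
      · have ha1 : a = -1 := by omega
        subst ha1
        push_cast
        ring
      · rw [if_neg hy]; ring
  have hs2 : ∀ x : ℤ × ℤ, ((x.2:ℝ)+1) * W (x.1, x.2+1) * (1-p1-p2)
      = p2 * ((N:ℝ) - (x.1:ℝ) - (x.2:ℝ)) * W x := by
    rintro ⟨a, b⟩
    simp only [hW]
    by_cases hx : 0 ≤ a ∧ 0 ≤ b ∧ a + b ≤ (N:ℤ)
    · obtain ⟨ha, hb, hab⟩ := hx
      obtain ⟨m, rfl⟩ := Int.eq_ofNat_of_zero_le ha
      obtain ⟨k, rfl⟩ := Int.eq_ofNat_of_zero_le hb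
      have hmk : m + k ≤ N := by exact_mod_cast hab
      have hbase : (0:ℤ) ≤ (m:ℤ) ∧ (0:ℤ) ≤ (k:ℤ) ∧ (m:ℤ) + (k:ℤ) ≤ (N:ℤ) := ⟨ha, hb, hab⟩
      rw [if_pos hbase]
      by_cases hlt : m + k < N
      · have hshift : (0:ℤ) ≤ (m:ℤ) ∧ (0:ℤ) ≤ (k:ℤ) + 1 ∧ (m:ℤ) + ((k:ℤ) + 1) ≤ (N:ℤ) := by
          omega
        rw [if_pos hshift]
        obtain ⟨r, hr⟩ : ∃ r, N - m - k = r + 1 := ⟨N - m - k - 1, by omega⟩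
        have e1 : (((k:ℤ))+1).toNat = k + 1 := by omega
        have e2 : ((m:ℤ)).toNat = m := by omega
        have e3 : ((k:ℤ)).toNat = k := by omega
        simp only [e1, e2, e3]
        have e4 : N - m - (k+1) = r := by omega
        have e5 : N - m - k = r + 1 := hr
        rw [e4, e5]
        have e6 : ((N:ℝ) - ((m:ℤ):ℝ) - ((k:ℤ):ℝ)) = (r:ℝ) + 1 := by
          have hN : N = m + k + (r+1) := by omega
          subst hN; push_cast; ring
        rw [e6]
        exact key2 m k r
      · have hshift : ¬((0:ℤ) ≤ (m:ℤ) ∧ (0:ℤ) ≤ (k:ℤ) + 1 ∧ (m:ℤ) + ((k:ℤ) + 1) ≤ (N:ℤ)) := by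
          omega
        rw [if_neg hshift]
        have e0 : ((N:ℝ) - ((m:ℤ):ℝ) - ((k:ℤ):ℝ)) = 0 := by
          have hN : N = m + k := by omega
          subst hN; push_cast; ring
        rw [e0]; ring
    · rw [if_neg hx]
      by_cases hy : 0 ≤ a ∧ 0 ≤ b + 1 ∧ a + (b + 1) ≤ (N:ℤ)
      · have hb1 : b = -1 := by omega
        subst hb1
        push_cast
        ring
      · rw [if_neg hy]; ring
  constructor
  · intro x
    simp only [fd1, fd2]
    apply mul_left_cancel₀ hqne
    push_cast
    linear_combination (p1 - 1) * hs1 x + p1 * hs2 x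
  · intro x
    simp only [fd1, fd2]
    apply mul_left_cancel₀ hqne
    push_cast
    linear_combination p2 * hs1 x + (p2 - 1) * hs2 x
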